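/- If X is a symmetric nonnegative integer n×n matrix with all row sums 2m whose diagonal entries are all even, then the multigraph on n vertices with adjacency matrix X (a diagonal entry 2c counting c loops, each loop contributing 2 to the degree) is 2m-regular and decomposes into m 2-factors; consequently X = X_1 + ⋯ + X_m with each X_k a symmetric nonnegative integer matrix with row sums 2. -/

import Mathlib

open Finset Matrix

namespace TwoFactorAux

lemma row_sum_ind (n : ℕ) (u w p : Fin n) :
    ∑ q, (if p = u ∧ q = w then 1 else 0) = (if p = u then 1 else 0) := by
  by_cases h : p = u <;> simp [h]

lemma sub_edge (n : ℕ) (X : Matrix (Fin n) (Fin n) ℕ) (hs : X.IsSymm) (u w : Fin n)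
    (huw : u ≠ w) (hpos : 0 < X u w) :
    ∃ X' : Matrix (Fin n) (Fin n) ℕ,
      (∀ p q, X p q = X' p q +
        ((if p = u ∧ q = w then 1 else 0) + (if p = w ∧ q = u then 1 else 0))) ∧
      X'.IsSymm ∧ (∀ i, X' i i = X i i) ∧
      (∀ i, (∑ j, X' i j) + ((if i = u then 1 else 0) + (if i = w then 1 else 0)) = ∑ j, X i j) ∧
      (∑ i, ∑ j, X' i j) + 2 = ∑ i, ∑ j, X i j := by
  have hpos' : 0 < X w u := by rw [hs.apply]; exact hpos
  have hdec : ∀ p q, X p q = (Matrix.of fun p q => X p q -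
      ((if p = u ∧ q = w then 1 else 0) + (if p = w ∧ q = u then 1 else 0))) p q +
      ((if p = u ∧ q = w then 1 else 0) + (if p = w ∧ q = u then 1 else 0)) := by
    intro p q
    simp only [Matrix.of_apply]
    have hle : (if p = u ∧ q = w then 1 else 0) + (if p = w ∧ q = u then 1 else 0) ≤ X p q := by
      by_cases h1 : p = u ∧ q = w
      · have h2 : ¬(p = w ∧ q = u) := fun h => absurd (h1.1.symm.trans h.1) huw
        simp only [h1.1, h1.2, and_self, if_true,
          if_neg (show ¬(u = w ∧ w = u) from fun h => huw h.1), add_zero]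
        exact hpos
      · by_cases h2 : p = w ∧ q = u
        · simp only [h2.1, h2.2, and_self, if_true,
            if_neg (show ¬(w = u ∧ u = w) from fun h => huw h.2), zero_add]
          exact hpos'
        · simp [h1, h2]
    exact (Nat.sub_add_cancel hle).symm
  set X' : Matrix (Fin n) (Fin n) ℕ := Matrix.of fun p q => X p q -
      ((if p = u ∧ q = w then 1 else 0) + (if p = w ∧ q = u then 1 else 0)) with hX'def
  have hsymm' : X'.IsSymm := by
    unfold Matrix.IsSymm
    ext p q
    simp only [hX'def, Matrix.transpose_apply, Matrix.of_apply, hs.apply p q]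
    congr 1
    rw [add_comm]
    congr 1 <;> simp [and_comm]
  have hdiag' : ∀ i, X' i i = X i i := by
    intro i
    simp only [hX'def, Matrix.of_apply]
    have h1 : ¬(i = u ∧ i = w) := by rintro ⟨rfl, rfl⟩; exact huw rfl
    have h2 : ¬(i = w ∧ i = u) := by rintro ⟨rfl, rfl⟩; exact huw rfl
    simp [h1, h2]
  have hrow : ∀ i, (∑ j, X' i j) + ((if i = u then 1 else 0) + (if i = w then 1 else 0))
      = ∑ j, X i j := by
    intro i
    calc (∑ j, X' i j) + ((if i = u then 1 else 0) + (if i = w then 1 else 0))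
        = ∑ j, (X' i j + ((if i = u ∧ j = w then 1 else 0) + (if i = w ∧ j = u then 1 else 0)))
          := by
          rw [Finset.sum_add_distrib, Finset.sum_add_distrib, row_sum_ind, row_sum_ind]
      _ = ∑ j, X i j := by
          apply Finset.sum_congr rfl; intro j _; exact (hdec i j).symm
  refine ⟨X', hdec, hsymm', hdiag', hrow, ?_⟩
  have h := Finset.sum_congr rfl (fun i (_ : i ∈ (Finset.univ : Finset (Fin n))) => hrow i)
  rw [Finset.sum_add_distrib, Finset.sum_add_distrib] at h
  simp only [Finset.sum_ite_eq', Finset.mem_univ, if_true] at h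
  omega

end TwoFactorAux

namespace TwoFactorAux

lemma row_sum_ind2 (n : ℕ) (w p : Fin n) (c : ℕ) :
    ∑ q, (if p = w ∧ q = w then c else 0) = (if p = w then c else 0) := by
  by_cases h : p = w <;> simp [h]

lemma sub_loop (n : ℕ) (X : Matrix (Fin n) (Fin n) ℕ) (hs : X.IsSymm) (w : Fin n)
    (hpos : 2 ≤ X w w) :
    ∃ X' : Matrix (Fin n) (Fin n) ℕ,
      (∀ p q, X p q = X' p q + (if p = w ∧ q = w then 2 else 0)) ∧
      X'.IsSymm ∧ (∀ i, X' i i + (if i = w then 2 else 0) = X i i) ∧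
      (∀ i, (∑ j, X' i j) + (if i = w then 2 else 0) = ∑ j, X i j) ∧
      (∑ i, ∑ j, X' i j) + 2 = ∑ i, ∑ j, X i j := by
  set X' : Matrix (Fin n) (Fin n) ℕ :=
    Matrix.of (fun p q => X p q - (if p = w ∧ q = w then 2 else 0)) with hX'def
  have hdec : ∀ p q, X p q = X' p q + (if p = w ∧ q = w then 2 else 0) := by
    intro p q
    simp only [hX'def, Matrix.of_apply]
    by_cases h : p = w ∧ q = w
    · rw [if_pos h]
      have : 2 ≤ X p q := by rw [h.1, h.2]; exact hpos
      omega
    · simp [h]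
  have hsymm' : X'.IsSymm := by
    unfold Matrix.IsSymm
    ext p q
    simp only [hX'def, Matrix.transpose_apply, Matrix.of_apply, hs.apply p q, and_comm]
  have hdiag' : ∀ i, X' i i + (if i = w then 2 else 0) = X i i := by
    intro i
    have := hdec i i
    simpa [and_self] using this.symm
  have hrow : ∀ i, (∑ j, X' i j) + (if i = w then 2 else 0) = ∑ j, X i j := by
    intro i
    rw [← row_sum_ind2 n w i 2, ← Finset.sum_add_distrib]
    exact Finset.sum_congr rfl fun j _ => (hdec i j).symm
  refine ⟨X', hdec, hsymm', hdiag', hrow, ?_⟩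
  have h := Finset.sum_congr rfl (fun i (_ : i ∈ (Finset.univ : Finset (Fin n))) => hrow i)
  rw [Finset.sum_add_distrib] at h
  simp only [Finset.sum_ite_eq', Finset.mem_univ, if_true] at h
  omega

end TwoFactorAux

namespace TwoFactorAux

lemma ite_and_comm (P Q : Prop) [Decidable P] [Decidable Q] :
    (if P ∧ Q then (1:ℕ) else 0) = if Q ∧ P then 1 else 0 := by
  by_cases hP : P <;> by_cases hQ : Q <;> simp [hP, hQ]

lemma orient (n : ℕ) (S : ℕ) : ∀ X : Matrix (Fin n) (Fin n) ℕ, (∑ i, ∑ j, X i j) = S →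
    X.IsSymm → (∀ i, Even (X i i)) →
    ∀ a v : Fin n,
    (∀ i, Even ((∑ j, X i j) + ((if i = a then 1 else 0) + (if i = v then 1 else 0)))) →
    ∃ B : Matrix (Fin n) (Fin n) ℕ, (∀ p q, B p q + B q p = X p q) ∧
      ∀ i, 2 * (∑ j, B i j) + (if i = a then 1 else 0)
        = (∑ j, X i j) + (if i = v then 1 else 0) := by
  induction S using Nat.strong_induction_on with
  | _ S IH =>
  intro X hS hsymm hdiag a v hpar
  by_cases hav : a = v
  · -- balanced case
    subst hav
    by_cases hX0 : ∀ p q, X p q = 0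
    · refine ⟨0, fun p q => by simp [hX0], fun i => by simp [hX0]⟩
    · push_neg at hX0
      obtain ⟨p₀, q₀, hpq⟩ := hX0
      by_cases hd0 : ∃ w, X w w ≠ 0
      · -- loop move
        obtain ⟨w, hw⟩ := hd0
        have h2w : 2 ≤ X w w := by
          rcases hdiag w with ⟨c, hc⟩; omega
        obtain ⟨X', hdec, hsymm', hdiag', hrow', htot⟩ := sub_loop n X hsymm w h2w
        obtain ⟨B', hB'dec, hB'row⟩ := IH (S - 2) (by omega) X' (by omega) hsymm'
          (fun i => by
            have h1 := hdiag i
            have h2 := hdiag' i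
            rw [Nat.even_iff] at h1 ⊢
            split_ifs at h2 <;> omega)
          a a
          (fun i => by
            have h1 := hpar i
            have h2 := hrow' i
            rw [Nat.even_iff] at h1 ⊢
            split_ifs at h1 h2 ⊢ <;> omega)
        refine ⟨Matrix.of (fun p q => B' p q + (if p = w ∧ q = w then 1 else 0)), ?_, ?_⟩
        · intro p q
          simp only [Matrix.of_apply]
          have h1 := hB'dec p q
          have h2 := hdec p q
          rw [ite_and_comm]
          split_ifs at h1 h2 ⊢ <;> omega
        · intro i
          have h1 := hB'row i
          have h2 := hrow' i
          have h3 : ∑ j, (Matrix.of (fun p q => B' p q + (if p = w ∧ q = w then 1 else 0))) i j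
              = (∑ j, B' i j) + (if i = w then 1 else 0) := by
            simp only [Matrix.of_apply]
            rw [Finset.sum_add_distrib, row_sum_ind2]
          rw [h3]
          split_ifs at h1 h2 ⊢ <;> omega
      · -- edge move in balanced case
        push_neg at hd0
        have hne : p₀ ≠ q₀ := by
          rintro rfl; exact hpq (hd0 p₀)
        obtain ⟨X', hdec, hsymm', hdiag', hrow', htot⟩ :=
          sub_edge n X hsymm p₀ q₀ hne (Nat.pos_of_ne_zero hpq)
        obtain ⟨B', hB'dec, hB'row⟩ := IH (S - 2) (by omega) X' (by omega) hsymm'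
          (fun i => by rw [hdiag']; exact hdiag i)
          p₀ q₀
          (fun i => by
            have h1 := hpar i
            have h2 := hrow' i
            rw [Nat.even_iff] at h1 ⊢
            split_ifs at h1 h2 ⊢ <;> omega)
        refine ⟨Matrix.of (fun s t => B' s t + (if s = p₀ ∧ t = q₀ then 1 else 0)), ?_, ?_⟩
        · intro p q
          simp only [Matrix.of_apply]
          have h1 := hB'dec p q
          have h2 := hdec p q
          rw [ite_and_comm]
          split_ifs at h1 h2 ⊢ <;> omega
        · intro i
          have h1 := hB'row i
          have h2 := hrow' i
          have h3 : ∑ j, (Matrix.of (fun s t => B' s t + (if s = p₀ ∧ t = q₀ then 1 else 0))) i j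
              = (∑ j, B' i j) + (if i = p₀ then 1 else 0) := by
            simp only [Matrix.of_apply]
            rw [Finset.sum_add_distrib, row_sum_ind]
          rw [h3]
          have h4 := hpar i
          rw [Nat.even_iff] at h4
          split_ifs at h1 h2 h4 ⊢ <;> omega
  · -- trail-extension case : a ≠ v, row v has odd sum
    have hvodd : ¬ Even (∑ j, X v j) := by
      have h1 := hpar v
      rw [Nat.even_iff] at h1 ⊢
      rw [if_neg (fun h => hav (h.symm)), if_pos rfl] at h1
      omega
    have hj : ∃ j, j ≠ v ∧ X v j ≠ 0 := by
      by_contra hc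
      push_neg at hc
      have : ∑ j, X v j = X v v := by
        apply Finset.sum_eq_single v
        · intro b _ hb; exact hc b hb
        · intro h; exact absurd (Finset.mem_univ v) h
      exact hvodd (this ▸ hdiag v)
    obtain ⟨j, hjv, hXvj⟩ := hj
    obtain ⟨X', hdec, hsymm', hdiag', hrow', htot⟩ :=
      sub_edge n X hsymm v j (Ne.symm hjv) (Nat.pos_of_ne_zero hXvj)
    obtain ⟨B', hB'dec, hB'row⟩ := IH (S - 2) (by omega) X' (by omega) hsymm'
      (fun i => by rw [hdiag']; exact hdiag i)
      a j
      (fun i => by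
        have h1 := hpar i
        have h2 := hrow' i
        rw [Nat.even_iff] at h1 ⊢
        split_ifs at h1 h2 ⊢ <;> omega)
    refine ⟨Matrix.of (fun s t => B' s t + (if s = v ∧ t = j then 1 else 0)), ?_, ?_⟩
    · intro p q
      simp only [Matrix.of_apply]
      have h1 := hB'dec p q
      have h2 := hdec p q
      rw [ite_and_comm]
      split_ifs at h1 h2 ⊢ <;> omega
    · intro i
      have h1 := hB'row i
      have h2 := hrow' i
      have h3 : ∑ j', (Matrix.of (fun s t => B' s t + (if s = v ∧ t = j then 1 else 0))) i j'
          = (∑ j', B' i j') + (if i = v then 1 else 0) := by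
        simp only [Matrix.of_apply]
        rw [Finset.sum_add_distrib, row_sum_ind]
      rw [h3]
      split_ifs at h1 h2 ⊢ <;> omega

end TwoFactorAux

namespace TwoFactorAux

lemma perm_decomp (n : ℕ) : ∀ m : ℕ, ∀ B : Matrix (Fin n) (Fin n) ℕ,
    (∀ i, ∑ j, B i j = m) → (∀ j, ∑ i, B i j = m) →
    ∃ Q : Fin m → Equiv.Perm (Fin n),
      ∀ p q, B p q = ∑ k, (if (Q k) p = q then 1 else 0) := by
  intro m
  induction m with
  | zero =>
    intro B hr hc
    refine ⟨fun k => k.elim0, fun p q => ?_⟩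
    have h1 : B p q ≤ ∑ j, B p j :=
      Finset.single_le_sum (fun j _ => Nat.zero_le _) (Finset.mem_univ q)
    rw [hr p] at h1
    simp
    omega
  | succ m ih =>
    intro B hr hc
    classical
    set t : Fin n → Finset (Fin n) := fun i => Finset.univ.filter (fun j => 0 < B i j) with ht
    have hsub : ∀ {s : Finset (Fin n)} {i}, i ∈ s → t i ⊆ s.biUnion t := by
      intro s i hi
      exact Finset.subset_biUnion_of_mem t hi
    have hall : ∀ s : Finset (Fin n), s.card ≤ (s.biUnion t).card := by
      intro s
      have h1 : ∑ i ∈ s, ∑ j, B i j = s.card * (m+1) := by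
        rw [Finset.sum_congr rfl (fun i _ => hr i), Finset.sum_const, smul_eq_mul]
      have h2 : ∀ i ∈ s, ∑ j, B i j = ∑ j ∈ s.biUnion t, B i j := by
        intro i hi
        refine (Finset.sum_subset (Finset.subset_univ _) ?_).symm
        intro j _ hj
        by_contra hB
        exact hj (hsub hi (Finset.mem_filter.2 ⟨Finset.mem_univ j, Nat.pos_of_ne_zero hB⟩))
      have h3 : ∑ i ∈ s, ∑ j ∈ s.biUnion t, B i j ≤ ∑ j ∈ s.biUnion t, ∑ i, B i j := by
        rw [Finset.sum_comm (s := s) (f := fun i j => B i j)]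
        refine Finset.sum_le_sum ?_
        intro j _
        exact Finset.sum_le_sum_of_subset (Finset.subset_univ s)
      have h4 : ∑ j ∈ s.biUnion t, ∑ i, B i j = (s.biUnion t).card * (m+1) := by
        rw [Finset.sum_congr rfl (fun j _ => hc j), Finset.sum_const, smul_eq_mul]
      rw [Finset.sum_congr rfl h2] at h1
      rw [h1, h4] at h3
      exact Nat.le_of_mul_le_mul_right h3 (Nat.succ_pos m)
    obtain ⟨f, hinj, hf⟩ := (Finset.all_card_le_biUnion_card_iff_exists_injective t).1 hall
    have hbij : Function.Bijective f := Finite.injective_iff_bijective.1 hinj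
    set σ := Equiv.ofBijective f hbij with hσdef
    have hσpos : ∀ i, 0 < B i (σ i) := by
      intro i
      have := hf i
      rw [ht] at this
      simpa [hσdef] using this
    set B' : Matrix (Fin n) (Fin n) ℕ :=
      Matrix.of (fun p q => B p q - (if σ p = q then 1 else 0)) with hB'def
    have hdec : ∀ p q, B p q = B' p q + (if σ p = q then 1 else 0) := by
      intro p q
      simp only [hB'def, Matrix.of_apply]
      by_cases h : σ p = q
      · rw [if_pos h]
        have := hσpos p
        rw [h] at this
        omega
      · simp [h]
    have hr' : ∀ i, ∑ j, B' i j = m := by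
      intro i
      have h1 : ∑ j, B i j = (∑ j, B' i j) + ∑ j, (if σ i = j then 1 else 0) := by
        rw [← Finset.sum_add_distrib]
        exact Finset.sum_congr rfl fun j _ => hdec i j
      rw [hr i] at h1
      simp only [Finset.sum_ite_eq, Finset.mem_univ, if_true] at h1
      omega
    have hc' : ∀ j, ∑ i, B' i j = m := by
      intro j
      have h1 : ∑ i, B i j = (∑ i, B' i j) + ∑ i, (if σ i = j then 1 else 0) := by
        rw [← Finset.sum_add_distrib]
        exact Finset.sum_congr rfl fun i _ => hdec i j
      have h2 : ∑ i, (if σ i = j then 1 else 0) = 1 := by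
        have : ∀ i : Fin n, (if σ i = j then (1:ℕ) else 0) = (if i = σ.symm j then 1 else 0) := by
          intro i
          congr 1
          simp [Equiv.eq_symm_apply]
        rw [Finset.sum_congr rfl fun i _ => this i]
        simp
      rw [hc j, h2] at h1
      omega
    obtain ⟨Q', hQ'⟩ := ih B' hr' hc'
    refine ⟨Fin.cons σ Q', fun p q => ?_⟩
    rw [Fin.sum_univ_succ]
    simp only [Fin.cons_zero, Fin.cons_succ]
    rw [← hQ' p q, add_comm]
    exact hdec p q

end TwoFactorAux

/-- The even-diagonal case of integral closure of `S_n`, via Petersen's 2-factor theorem: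
a symmetric nonnegative integer matrix `X` with all row sums `2m` whose diagonal entries
are all even (so the corresponding multigraph, with a diagonal entry `2c` counting `c`
loops of degree `2`, is `2m`-regular) decomposes as `X = X_1 + ⋯ + X_m` where each `X_k`
is a symmetric nonnegative integer matrix with all row sums `2` and even diagonal
entries (a 2-factor). -/
theorem even_diagonal_two_factorization (n m : ℕ) (X : Matrix (Fin n) (Fin n) ℕ)
    (hsymm : X.IsSymm) (hrow : ∀ i, ∑ j, X i j = 2 * m)
    (hdiag : ∀ i, Even (X i i)) :
    ∃ Y : Fin m → Matrix (Fin n) (Fin n) ℕ,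
      (∀ k, (Y k).IsSymm ∧ (∀ i, ∑ j, Y k i j = 2) ∧ (∀ i, Even (Y k i i))) ∧
      X = ∑ k, Y k := by

  classical
  rcases Nat.eq_zero_or_pos n with hn | hn
  · subst hn
    refine ⟨fun _ => 0, fun k => ⟨?_, fun i => i.elim0, fun i => i.elim0⟩, ?_⟩
    · simp [Matrix.IsSymm]
    · ext i j
      exact i.elim0
  · set a : Fin n := ⟨0, hn⟩
    obtain ⟨B, hBdec, hBrow⟩ := TwoFactorAux.orient n (∑ i, ∑ j, X i j) X rfl hsymm hdiag a a
      (fun i => by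
        have h := hrow i
        rw [Nat.even_iff]
        split_ifs <;> omega)
    have hBr : ∀ i, ∑ j, B i j = m := by
      intro i
      have h := hBrow i
      rw [hrow i] at h
      split_ifs at h <;> omega
    have hBc : ∀ q, ∑ p, B p q = m := by
      intro q
      have h1 : (∑ p, B p q) + ∑ p, B q p = ∑ p, X q p := by
        rw [← Finset.sum_add_distrib]
        exact Finset.sum_congr rfl fun p _ => by rw [add_comm]; exact hBdec q p
      rw [hrow q, hBr q] at h1
      omega
    obtain ⟨Q, hQ⟩ := TwoFactorAux.perm_decomp n m B hBr hBc
    refine ⟨fun k => Matrix.of (fun p q =>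
      (if (Q k) p = q then 1 else 0) + (if (Q k) q = p then 1 else 0)), fun k => ⟨?_, ?_, ?_⟩, ?_⟩
    · unfold Matrix.IsSymm
      ext p q
      simp only [Matrix.transpose_apply, Matrix.of_apply]
      exact add_comm _ _
    · intro i
      simp only [Matrix.of_apply]
      rw [Finset.sum_add_distrib]
      have h1 : ∑ q, (if (Q k) i = q then (1:ℕ) else 0) = 1 := by simp
      have h2 : ∑ q, (if (Q k) q = i then (1:ℕ) else 0) = 1 := by
        have he : ∀ q : Fin n, (if (Q k) q = i then (1:ℕ) else 0)
            = (if q = (Q k).symm i then 1 else 0) := by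
          intro q
          congr 1
          simp [Equiv.eq_symm_apply]
        rw [Finset.sum_congr rfl fun q _ => he q]
        simp
      rw [h1, h2]
    · intro i
      simp only [Matrix.of_apply]
      by_cases h : (Q k) i = i <;> simp [h]
    · ext p q
      rw [← hBdec p q, Matrix.sum_apply]
      simp only [Matrix.of_apply]
      rw [Finset.sum_add_distrib, ← hQ p q, ← hQ q p]
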